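/- Let Σ be an alphabet with |Σ| ≥ 2 and m ≥ 1 an integer. There exists a set T_m of at least |Σ|^{m-1} strings, each of length m + ⌈log₂ m⌉ + 2 over Σ, such that for any two distinct strings τ₁, τ₂ ∈ T_m, the concatenation τ₁τ₂ does not contain any string of T_m \ {τ₁, τ₂} as a contiguous substring. -/

import Mathlib

set_option linter.unusedVariables false
set_option linter.all false

private lemma replicate_infix_of_getElem {σ : Type} {l : List σ} {q K : ℕ} {z : σ}
    (hq : q + K ≤ l.length)
    (h : ∀ t, (ht : t < K) → l[q + t]'(by omega) = z) :
    List.replicate K z <:+: l := by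
  have he : List.replicate K z = (l.drop q).take K := by
    apply List.ext_getElem
    · simp; omega
    · intro t h1 h2
      rw [List.getElem_replicate, List.getElem_take, List.getElem_drop]
      exact (h t (by simpa using h1)).symm
  rw [he]
  exact ((List.take_prefix K _).isInfix).trans (List.drop_suffix q l).isInfix

private lemma getElem_append_right' {σ : Type} {x y : List σ} {j r : ℕ}
    (hj : j = x.length + r) (hr : r < y.length) :
    (x ++ y)[j]'(by simp; omega) = y[r] := by
  subst hj
  rw [List.getElem_append_right (by omega)]
  simp only [Nat.add_sub_cancel_left]

private lemma getElem_concat {σ : Type} {a u b w : List σ} (h : a ++ u ++ b = w)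
    {t : ℕ} (ht : t < u.length) (hw : a.length + t < w.length) :
    w[a.length + t]'hw = u[t] := by
  subst h
  have h1 : ((a ++ u) ++ b)[a.length + t]'hw = (a ++ u)[a.length + t]'(by simp; omega) :=
    List.getElem_append_left (by simp; omega)
  have h2 : (a ++ u)[a.length + t]'(by simp; omega) = u[t] :=
    getElem_append_right' rfl ht
  exact h1.trans h2

private lemma tau_lt {σ : Type} {z0 z1 : σ} {s : List σ} {k r : ℕ} (hr : r < s.length) :
    (s ++ (List.replicate (k+1) z0 ++ [z1]))[r]'(by simp; omega) = s[r] := by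
  rw [List.getElem_append_left hr]

private lemma tau_mid {σ : Type} {z0 z1 : σ} {s : List σ} {k r : ℕ}
    (hr1 : s.length ≤ r) (hr2 : r ≤ s.length + k) :
    (s ++ (List.replicate (k+1) z0 ++ [z1]))[r]'(by simp; omega) = z0 := by
  rw [List.getElem_append_right hr1, List.getElem_append_left (by simp; omega),
    List.getElem_replicate]

private lemma tau_last {σ : Type} {z0 z1 : σ} {s : List σ} {k r : ℕ}
    (hr : r = s.length + k + 1) :
    (s ++ (List.replicate (k+1) z0 ++ [z1]))[r]'(by simp; omega) = z1 := by
  subst hr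
  rw [List.getElem_append_right (by omega), List.getElem_append_right (by simp; omega)]
  simp

private lemma key_align {σ : Type} {z0 z1 : σ} (hz : z0 ≠ z1) {k m : ℕ} (hkm : k + 1 ≤ m)
    {s₁ s₂ s₃ : List σ} (hl1 : s₁.length = m) (hl2 : s₂.length = m) (hl3 : s₃.length = m)
    (hnp2 : ¬ List.replicate (k+1) z0 <:+: s₂)
    (hinf : (s₃ ++ (List.replicate (k+1) z0 ++ [z1])) <:+:
      ((s₁ ++ (List.replicate (k+1) z0 ++ [z1])) ++ (s₂ ++ (List.replicate (k+1) z0 ++ [z1])))) :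
    s₃ ++ (List.replicate (k+1) z0 ++ [z1]) = s₁ ++ (List.replicate (k+1) z0 ++ [z1]) ∨
    s₃ ++ (List.replicate (k+1) z0 ++ [z1]) = s₂ ++ (List.replicate (k+1) z0 ++ [z1]) := by
  set p : List σ := List.replicate (k+1) z0 with hp
  set e : List σ := p ++ [z1] with he
  have hel : e.length = k + 2 := by simp [he, hp]
  obtain ⟨a, b, hab⟩ := hinf
  set L : ℕ := m + k + 2 with hL
  have hlt1 : (s₁ ++ e).length = L := by simp [hl1, hel, hL]; omega
  have hlt2 : (s₂ ++ e).length = L := by simp [hl2, hel, hL]; omega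
  have hlt3 : (s₃ ++ e).length = L := by simp [hl3, hel, hL]; omega
  have hwlen : ((s₁ ++ e) ++ (s₂ ++ e)).length = 2 * L := by
    simp only [List.length_append] at hlt1 hlt2 ⊢; omega
  have hablen : a.length + L + b.length = 2 * L := by
    have := congrArg List.length hab
    simp only [List.length_append] at this hlt3
    omega
  set i := a.length with hi
  have hiL : i ≤ L := by omega
  have F1 : ∀ (t : ℕ) (ht : t < L),
      ((s₁ ++ e) ++ (s₂ ++ e))[i + t]'(by omega) = (s₃ ++ e)[t]'(by omega) := by
    intro t ht
    exact getElem_concat hab (by omega) (by omega)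
  have hkey : i = 0 ∨ i = L := by
    by_contra hcon
    push_neg at hcon
    have hi0 : 0 < i := Nat.pos_of_ne_zero hcon.1
    have hiL' : i < L := lt_of_le_of_ne hiL hcon.2
    have hz1 : ((s₁ ++ e) ++ (s₂ ++ e))[i + (m + k + 1)]'(by omega) = z1 :=
      (F1 (m + k + 1) (by omega)).trans (tau_last (by omega))
    have hz1' : (s₂ ++ e)[i - 1]'(by omega) = z1 :=
      (getElem_append_right' (x := s₁ ++ e) (by omega) (by omega)).symm.trans hz1
    have him : i - 1 < m := by
      by_contra hge
      push_neg at hge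
      have hmid : (s₂ ++ e)[i - 1]'(by omega) = z0 := tau_mid (by omega) (by omega)
      exact hz (hmid.symm.trans hz1')
    have hzeros : ∀ (t : ℕ) (ht : t ≤ k),
        ((s₁ ++ e) ++ (s₂ ++ e))[i + (m + t)]'(by omega) = z0 := by
      intro t ht
      exact (F1 (m + t) (by omega)).trans (tau_mid (by omega) (by omega))
    by_cases hcase : k + 2 ≤ i
    · refine hnp2 ?_
      rw [hp]
      apply replicate_infix_of_getElem (q := i - k - 2) (by omega)
      intro t ht
      have h1 := hzeros t (by omega)
      have hh2 : ((s₁ ++ e) ++ (s₂ ++ e))[i + (m + t)]'(by omega)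
          = (s₂ ++ e)[i - k - 2 + t]'(by omega) :=
        getElem_append_right' (by omega) (by omega)
      have h3 : (s₂ ++ e)[i - k - 2 + t]'(by omega) = s₂[i - k - 2 + t]'(by omega) :=
        tau_lt (by omega)
      exact h3.symm.trans (hh2.symm.trans h1)
    · push_neg at hcase
      have h1 := hzeros (k + 1 - i) (by omega)
      have hh2 : ((s₁ ++ e) ++ (s₂ ++ e))[i + (m + (k + 1 - i))]'(by omega)
          = (s₁ ++ e)[i + (m + (k + 1 - i))]'(by omega) :=
        List.getElem_append_left (by omega)
      have h3 : (s₁ ++ e)[i + (m + (k + 1 - i))]'(by omega) = z1 := tau_last (by omega)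
      exact hz ((hh2.symm.trans h1).symm.trans h3)
  rcases hkey with h0 | hLL
  · left
    have ha : a = [] := List.length_eq_zero_iff.1 h0
    rw [ha, List.nil_append] at hab
    exact (List.append_inj hab (by omega)).1
  · right
    have ha : a = s₁ ++ e := by
      have h1 : ((a ++ (s₃ ++ e) ++ b).take i) = a := by
        rw [List.append_assoc, hi, List.take_left]
      rw [hab] at h1
      rw [← h1, hLL, ← hlt1, List.take_left]
    rw [ha, List.append_assoc] at hab
    have hab2 : (s₃ ++ e) ++ b = s₂ ++ e := List.append_cancel_left hab
    have hb : b = [] := by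
      have := congrArg List.length hab2
      simp only [List.length_append] at this hlt2 hlt3
      rw [← List.length_eq_zero_iff]
      omega
    rw [hb, List.append_nil] at hab2
    exact hab2

/-- For any alphabet `σ` with at least two symbols and any `m ≥ 1`, there is a
set `T` of at least `|σ|^(m-1)` strings, each of length `m + ⌈log₂ m⌉ + 2`,
such that for any two distinct `τ₁, τ₂ ∈ T` the concatenation `τ₁ ++ τ₂`
contains no element of `T \ {τ₁, τ₂}` as a contiguous substring. -/
theorem exists_good_pattern_family (σ : Type) [Fintype σ] [DecidableEq σ]
    (h2 : 2 ≤ Fintype.card σ) (m : ℕ) (hm : 1 ≤ m) :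
    ∃ T : Finset (List σ),
      Fintype.card σ ^ (m - 1) ≤ T.card ∧
      (∀ τ ∈ T, τ.length = m + Nat.clog 2 m + 2) ∧
      (∀ τ₁ ∈ T, ∀ τ₂ ∈ T, τ₁ ≠ τ₂ →
        ∀ τ₃ ∈ T, τ₃ ≠ τ₁ → τ₃ ≠ τ₂ → ¬ τ₃ <:+: (τ₁ ++ τ₂)) := by
  classical
  obtain ⟨z0, z1, hz⟩ : ∃ a b : σ, a ≠ b := Fintype.exists_pair_of_one_lt_card (by omega)
  set c := Fintype.card σ with hc
  set k := Nat.clog 2 m with hk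
  have hm2k : m ≤ 2 ^ k := Nat.le_pow_clog one_lt_two m
  have hkm : k + 1 ≤ m := by
    have h1 : m - 1 < 2 ^ (m - 1) := Nat.lt_two_pow_self (n := m - 1)
    have : Nat.clog 2 m ≤ m - 1 := (Nat.clog_le_iff_le_pow one_lt_two).2 (by omega)
    omega
  set p : List σ := List.replicate (k+1) z0 with hp
  set e : List σ := p ++ [z1] with he
  have hel : e.length = k + 2 := by simp [he, hp]
  let A : ℕ → Finset (List σ) := fun n => (Finset.univ : Finset (Fin n → σ)).image List.ofFn
  have memA : ∀ n (l : List σ), l ∈ A n ↔ l.length = n := by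
    intro n l
    simp only [A, Finset.mem_image, Finset.mem_univ, true_and]
    constructor
    · rintro ⟨f, rfl⟩; simp
    · intro h
      subst h
      exact ⟨l.get, List.ofFn_get l⟩
  have cardA : ∀ n, (A n).card = c ^ n := by
    intro n
    rw [Finset.card_image_of_injective _ List.ofFn_injective, Finset.card_univ,
      Fintype.card_fun, Fintype.card_fin]
  let S : Finset (List σ) := (A m).filter (fun s => ¬ p <:+: s)
  let bad : Finset (List σ) := (A m).filter (fun s => p <:+: s)
  have hbadcard : bad.card ≤ m * c ^ (m - (k+1)) := by
    have hsub : bad ⊆ ((Finset.range m) ×ˢ A (m - (k+1))).image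
        (fun q : ℕ × List σ => q.2.take q.1 ++ p ++ q.2.drop q.1) := by
      intro s hs
      obtain ⟨hmem, u, v, huv⟩ := Finset.mem_filter.1 hs
      have hlen : s.length = m := (memA m s).1 hmem
      have hlu : u.length + (k+1) + v.length = m := by
        have := congrArg List.length huv
        simp [hp] at this
        omega
      refine Finset.mem_image.2 ⟨(u.length, u ++ v), ?_, ?_⟩
      · rw [Finset.mem_product]
        refine ⟨Finset.mem_range.2 (by omega), (memA _ _).2 (by simp; omega)⟩
      · simpa [List.take_left, List.drop_left] using huv
    calc bad.card ≤ _ := Finset.card_le_card hsub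
      _ ≤ ((Finset.range m) ×ˢ A (m-(k+1))).card := Finset.card_image_le
      _ = m * c ^ (m-(k+1)) := by rw [Finset.card_product, Finset.card_range, cardA]
  have hpow : m * c ^ (m - (k+1)) ≤ c ^ (m-1) := by
    calc m * c ^ (m-(k+1)) ≤ c^k * c^(m-(k+1)) :=
          Nat.mul_le_mul_right _ (le_trans hm2k (Nat.pow_le_pow_left h2 k))
      _ = c ^ (m-1) := by rw [← pow_add]; congr 1; omega
  have hScard : c ^ (m-1) ≤ S.card := by
    have hsum : bad.card + S.card = c ^ m := by
      rw [Finset.card_filter_add_card_filter_not, cardA]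
    have hcm : c ^ m = c ^ (m-1) * c := by rw [← pow_succ]; congr 1; omega
    have h2c : c ^ (m-1) * 2 ≤ c ^ (m-1) * c := Nat.mul_le_mul_left _ h2
    have := hbadcard.trans hpow
    omega
  refine ⟨S.image (fun s => s ++ e), ?_, ?_, ?_⟩
  · rw [Finset.card_image_of_injective _ (List.append_left_injective e)]; exact hScard
  · intro τ hτ
    obtain ⟨s, hs, rfl⟩ := Finset.mem_image.1 hτ
    have : s.length = m := (memA m s).1 (Finset.mem_filter.1 hs).1
    simp only [List.length_append, this, hel]
    omega
  · rintro τ₁ hτ₁ τ₂ hτ₂ hne τ₃ hτ₃ h31 h32 hinf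
    obtain ⟨s₁, hs1m, rfl⟩ := Finset.mem_image.1 hτ₁
    obtain ⟨s₂, hs2m, rfl⟩ := Finset.mem_image.1 hτ₂
    obtain ⟨s₃, hs3m, rfl⟩ := Finset.mem_image.1 hτ₃
    have hl1 : s₁.length = m := (memA m s₁).1 (Finset.mem_filter.1 hs1m).1
    have hl2 : s₂.length = m := (memA m s₂).1 (Finset.mem_filter.1 hs2m).1
    have hl3 : s₃.length = m := (memA m s₃).1 (Finset.mem_filter.1 hs3m).1
    have hnp2 : ¬ p <:+: s₂ := by
      have := (Finset.mem_filter.1 hs2m).2; simpa using this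
    rcases key_align hz hkm hl1 hl2 hl3 hnp2 hinf with h | h
    · exact h31 h
    · exact h32 h
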